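/- If a string s admits a factorization into m phrases such that every phrase is either a single character or the concatenation of complete consecutive preceding phrases, then there is a context-free grammar in Chomsky normal form generating exactly {s} with O(m log m) productions. -/

import Mathlib

open List

/-- The (non-self-referencing) greedy LZ77 parse of `s`: the phrases are nonempty and
concatenate to `s`; each phrase is a single character or an infix of the already-parsed
prefix, and each phrase is a longest prefix of the unparsed suffix occurring in the
parsed prefix. -/
def IsLZ77Parse {α : Type} (s : List α) (P : List (List α)) : Prop :=
  P.flatten = s ∧ (∀ p ∈ P, p ≠ []) ∧
  ∀ i : Fin P.length,
    ((P.get i).length = 1 ∨ P.get i <:+: (P.take i.1).flatten) ∧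
    ∀ q : List α, q <+: (P.drop i.1).flatten → q <:+: (P.take i.1).flatten →
      q.length ≤ max (P.get i).length 1

/-- The size of a context-free grammar: total number of symbols on right-hand sides. -/
noncomputable def grammarSize {T : Type} (G : ContextFreeGrammar T) : ℕ :=
  ∑ r ∈ G.rules, r.output.length

/-- A grammar is in Chomsky normal form: every rule is `A → a` or `A → B C`. -/
def IsCNF {T : Type} (G : ContextFreeGrammar T) : Prop :=
  ∀ r ∈ G.rules, (∃ a : T, r.output = [Symbol.terminal a]) ∨
    (∃ B C : G.NT, r.output = [Symbol.nonterminal B, Symbol.nonterminal C])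

/-- The set of phrase boundaries of a factorization, measured as the number of
characters to the left of the boundary. -/
def boundaries {α : Type} (P : List (List α)) : Set ℕ :=
  { b | ∃ k ≤ P.length, b = (P.take k).flatten.length }

/-- Phrase `i` of `Q` is the concatenation of the complete consecutive preceding
phrases `j, j+1, …, k-1` of `Q`. -/
def IsConcatOfPrecedingPhrases {α : Type} (Q : List (List α)) (i : Fin Q.length) : Prop :=
  ∃ j k : ℕ, j < k ∧ k ≤ i.1 ∧ Q.get i = ((Q.drop j).take (k - j)).flatten

namespace CNFAux

universe uN

variable {T : Type} {N : Type uN}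

/-- Evaluate a symbol. -/
def evalS (val : N → List T) : Symbol T N → List T
  | .terminal a => [a]
  | .nonterminal B => val B

/-- Evaluate a sentential form. -/
def evalL (val : N → List T) (w : List (Symbol T N)) : List T :=
  (w.map (evalS val)).flatten

lemma evalL_append (val : N → List T) (u v : List (Symbol T N)) :
    evalL val (u ++ v) = evalL val u ++ evalL val v := by
  simp [evalL]

lemma evalL_term (val : N → List T) (a : T) : evalL val [Symbol.terminal a] = [a] := by
  simp [evalL, evalS]

lemma evalL_two (val : N → List T) (B C : N) :
    evalL val [Symbol.nonterminal B, Symbol.nonterminal C] = val B ++ val C := by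
  simp [evalL, evalS]

lemma evalL_map_terminal (val : N → List T) (w : List T) :
    evalL val (w.map Symbol.terminal) = w := by
  induction w with
  | nil => rfl
  | cons a w ih => simpa [evalL, evalS] using ih

lemma derives_eval {G : ContextFreeGrammar T} (val : G.NT → List T)
    (hval : ∀ r ∈ G.rules, val r.input = evalL val r.output) {u v : List (Symbol T G.NT)}
    (h : G.Derives u v) : evalL val u = evalL val v := by
  induction h with
  | refl => rfl
  | tail _ hp ih =>
      obtain ⟨r, hr, hrw⟩ := hp
      obtain ⟨p, q, rfl, rfl⟩ := hrw.exists_parts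
      rw [ih]
      simp only [evalL_append]
      have : evalL val [Symbol.nonterminal r.input] = evalL val r.output := by
        simpa [evalL, evalS] using hval r hr
      rw [this]

lemma derives_val {G : ContextFreeGrammar T} (val : G.NT → List T) (rank : G.NT → ℕ)
    (S : Finset G.NT) (f : G.NT → List (Symbol T G.NT))
    (hrule : ∀ A ∈ S, (⟨A, f A⟩ : ContextFreeRule T G.NT) ∈ G.rules)
    (hval : ∀ A ∈ S, val A = evalL val (f A))
    (hclosed : ∀ A ∈ S, ∀ B, Symbol.nonterminal B ∈ f A → B ∈ S ∧ rank B < rank A) :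
    ∀ A ∈ S, G.Derives [Symbol.nonterminal A] ((val A).map Symbol.terminal) := by
  have main : ∀ n A, A ∈ S → rank A < n →
      G.Derives [Symbol.nonterminal A] ((val A).map Symbol.terminal) := by
    intro n
    induction n with
    | zero => intro A _ h; omega
    | succ n ih =>
      intro A hA hr
      have h1 : G.Produces [Symbol.nonterminal A] (f A) :=
        ⟨⟨A, f A⟩, hrule A hA, ContextFreeRule.Rewrites.input_output⟩
      refine h1.trans_derives ?_
      rw [hval A hA]
      have sub : ∀ w : List (Symbol T G.NT),
          (∀ B, Symbol.nonterminal B ∈ w → B ∈ S ∧ rank B < n) →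
          G.Derives w ((evalL val w).map Symbol.terminal) := by
        intro w
        induction w with
        | nil => intro _; exact ContextFreeGrammar.Derives.refl []
        | cons x xs ihw =>
          intro hw
          have hxs := ihw (fun B hB => hw B (List.mem_cons_of_mem _ hB))
          have hx : G.Derives [x] ((evalS val x).map Symbol.terminal) := by
            cases x with
            | terminal a => exact ContextFreeGrammar.Derives.refl _
            | nonterminal B =>
              have hB := hw B (List.mem_cons_self)
              exact ih B hB.1 hB.2
          have e2 : (evalL val (x :: xs)).map (Symbol.terminal : T → Symbol T G.NT)
              = ((evalS val x).map (Symbol.terminal : T → Symbol T G.NT))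
                ++ (evalL val xs).map (Symbol.terminal : T → Symbol T G.NT) := by
            simp [evalL]
          rw [e2]
          exact (hx.append_right xs).trans (hxs.append_left _)
      refine sub (f A) ?_
      intro B hB
      have := hclosed A hA B hB
      exact ⟨this.1, by omega⟩
  intro A hA
  exact main (rank A + 1) A hA (Nat.lt_succ_self _)

theorem generic {T : Type} (G : ContextFreeGrammar T)
    [DecidableEq (ContextFreeRule T G.NT)]
    (val : G.NT → List T) (rank : G.NT → ℕ)
    (S : Finset G.NT) (f : G.NT → List (Symbol T G.NT))
    (hG : G.rules = S.image (fun A => ⟨A, f A⟩))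
    (hval : ∀ A ∈ S, val A = evalL val (f A))
    (hclosed : ∀ A ∈ S, ∀ B, Symbol.nonterminal B ∈ f A → B ∈ S ∧ rank B < rank A)
    (hcnf : ∀ A ∈ S, (∃ a : T, f A = [Symbol.terminal a]) ∨
      (∃ B C : G.NT, f A = [Symbol.nonterminal B, Symbol.nonterminal C]))
    (hinit : G.initial ∈ S) :
    (∀ r ∈ G.rules, (∃ a : T, r.output = [Symbol.terminal a]) ∨
      (∃ B C : G.NT, r.output = [Symbol.nonterminal B, Symbol.nonterminal C]))
    ∧ G.language = {val G.initial} ∧ G.rules.card ≤ S.card := by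
  have hmemrule : ∀ r ∈ G.rules, ∃ A ∈ S, r = ⟨A, f A⟩ := by
    intro r hr
    rw [hG] at hr
    obtain ⟨A, hA, h⟩ := Finset.mem_image.mp hr
    exact ⟨A, hA, h.symm⟩
  refine ⟨?_, ?_, ?_⟩
  · intro r hr
    obtain ⟨A, hA, rfl⟩ := hmemrule r hr
    exact hcnf A hA
  · ext w
    simp only [ContextFreeGrammar.mem_language_iff, Set.mem_singleton_iff]
    constructor
    · intro h
      have hv : ∀ r ∈ G.rules, val r.input = evalL val r.output := by
        intro r hr
        obtain ⟨A, hA, rfl⟩ := hmemrule r hr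
        exact hval A hA
      have := derives_eval val hv h
      rw [evalL_map_terminal] at this
      exact (by simpa [evalL, evalS] using this.symm : w = val G.initial)
    · rintro rfl
      have hrule : ∀ A ∈ S, (⟨A, f A⟩ : ContextFreeRule T G.NT) ∈ G.rules := by
        intro A hA
        rw [hG]
        exact Finset.mem_image_of_mem _ hA
      exact derives_val val rank S f hrule hval hclosed G.initial hinit
  · rw [hG]
    exact Finset.card_image_le

universe u

/-- Lift a symbol along `ULift`. -/
def liftSym {T N : Type} : Symbol T N → Symbol T (ULift.{u} N)
  | .terminal a => .terminal a
  | .nonterminal B => .nonterminal (ULift.up B)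

theorem generic_lift {T : Type} {N₀ : Type} (init₀ : N₀)
    (val : N₀ → List T) (rank : N₀ → ℕ) (S : Finset N₀) (f : N₀ → List (Symbol T N₀))
    (hval : ∀ A ∈ S, val A = evalL val (f A))
    (hclosed : ∀ A ∈ S, ∀ B, Symbol.nonterminal B ∈ f A → B ∈ S ∧ rank B < rank A)
    (hcnf : ∀ A ∈ S, (∃ a : T, f A = [Symbol.terminal a]) ∨
      (∃ B C : N₀, f A = [Symbol.nonterminal B, Symbol.nonterminal C]))
    (hinit : init₀ ∈ S) :
    ∃ G : ContextFreeGrammar T,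
      (∀ r ∈ G.rules, (∃ a : T, r.output = [Symbol.terminal a]) ∨
        (∃ B C : G.NT, r.output = [Symbol.nonterminal B, Symbol.nonterminal C]))
      ∧ G.language = {val init₀} ∧ G.rules.card ≤ S.card := by
  classical
  set S' : Finset (ULift.{0} N₀) := S.image ULift.up with hS'
  set f' : ULift.{0} N₀ → List (Symbol T (ULift.{0} N₀)) :=
    fun A => (f A.down).map liftSym with hf'
  set G : ContextFreeGrammar T :=
    ⟨ULift.{0} N₀, ULift.up init₀, S'.image (fun A => ⟨A, f' A⟩)⟩ with hG
  have hmem' : ∀ A : ULift.{0} N₀, A ∈ S' ↔ A.down ∈ S := by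
    intro A
    rw [hS', Finset.mem_image]
    constructor
    · rintro ⟨x, hx, rfl⟩
      exact hx
    · intro h
      exact ⟨A.down, h, rfl⟩
  have hES : ∀ x : Symbol T N₀,
      evalS (fun A : ULift.{0} N₀ => val A.down) (liftSym.{0} x) = evalS val x := by
    intro x
    cases x <;> rfl
  have hevalL : ∀ w : List (Symbol T N₀),
      evalL (fun A : ULift.{0} N₀ => val A.down) (w.map liftSym) = evalL val w := by
    intro w
    unfold evalL
    rw [List.map_map]
    congr 1
    exact List.map_congr_left fun x _ => hES x
  have hntmem : ∀ (w : List (Symbol T N₀)) (B : ULift.{0} N₀),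
      Symbol.nonterminal B ∈ w.map liftSym ↔ Symbol.nonterminal B.down ∈ w := by
    intro w B
    rw [List.mem_map]
    constructor
    · rintro ⟨x, hx, he⟩
      cases x with
      | terminal a => exact absurd he (by simp [liftSym])
      | nonterminal C =>
        have : ULift.up C = B := by
          simpa [liftSym] using he
        rw [← this]
        exact hx
    · intro h
      exact ⟨Symbol.nonterminal B.down, h, by simp [liftSym]⟩
  obtain ⟨g1, g2, g3⟩ := generic G (fun A => val A.down) (fun A => rank A.down) S' f' rfl
    (by
      intro A hA
      show val A.down = evalL _ ((f A.down).map liftSym)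
      rw [hevalL]
      exact hval A.down ((hmem' A).mp hA))
    (by
      intro A hA B hB
      rw [hf'] at hB
      simp only at hB
      rw [hntmem] at hB
      obtain ⟨h1, h2⟩ := hclosed A.down ((hmem' A).mp hA) B.down hB
      exact ⟨(hmem' B).mpr h1, h2⟩)
    (by
      intro A hA
      rcases hcnf A.down ((hmem' A).mp hA) with ⟨a, ha⟩ | ⟨B, C, h⟩
      · left
        exact ⟨a, by show (f A.down).map liftSym = _; rw [ha]; rfl⟩
      · right
        exact ⟨ULift.up B, ULift.up C, by show (f A.down).map liftSym = _; rw [h]; rfl⟩)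
    ((hmem' _).mpr hinit)
  exact ⟨G, g1, g2, le_trans g3 Finset.card_image_le⟩

variable {α : Type}

/-- Concatenation of the phrases `p, p+1, …, p+n-1`. -/
def iv (Q : List (List α)) (p n : ℕ) : List α := ((Q.drop p).take n).flatten

lemma iv_add (Q : List (List α)) (p a b : ℕ) :
    iv Q p (a + b) = iv Q p a ++ iv Q (p + a) b := by
  unfold iv
  rw [List.take_add, List.flatten_append, List.drop_drop]

lemma iv_one (Q : List (List α)) (p : ℕ) (h : p < Q.length) : iv Q p 1 = Q.getD p [] := by
  unfold iv
  rw [List.drop_eq_getElem_cons h, List.take_succ_cons, List.take_zero, List.flatten_cons,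
    List.flatten_nil, List.append_nil, List.getD_eq_getElem?_getD, List.getElem?_eq_getElem h]
  rfl

lemma getD_eq (Q : List (List α)) {i : ℕ} (hi : i < Q.length) : Q.getD i [] = Q[i] := by
  rw [List.getD_eq_getElem?_getD, List.getElem?_eq_getElem hi]
  rfl

open Classical in
/-- A chosen witness for "phrase `i` is a concatenation of preceding phrases". -/
noncomputable def jk (Q : List (List α)) (i : ℕ) : ℕ × ℕ :=
  if h : ∃ p : ℕ × ℕ, p.1 < p.2 ∧ p.2 ≤ i ∧ Q.getD i [] = iv Q p.1 (p.2 - p.1)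
  then h.choose else (0, 0)

/-- Resolve duplicate phrases: returns `none` if phrase `i` is (equal to) a single
character, otherwise an interval `[j, k)` of length at least 2 of preceding phrases. -/
noncomputable def resolveF (Q : List (List α)) : ℕ → ℕ → Option (ℕ × ℕ)
  | 0, _ => none
  | fuel + 1, i =>
    if (Q.getD i []).length = 1 then none
    else if (jk Q i).2 - (jk Q i).1 ≤ 1 then resolveF Q fuel (jk Q i).1
    else some (jk Q i)

noncomputable def resolve (Q : List (List α)) (i : ℕ) : Option (ℕ × ℕ) :=
  resolveF Q (i + 1) i

/-- One step of the greedy binary decomposition of an interval of phrases. -/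
def stp : ℕ × ℕ → ℕ × ℕ :=
  fun p => (p.1 + 2 ^ Nat.log 2 (p.2 - 1), p.2 - 2 ^ Nat.log 2 (p.2 - 1))

/-- State after `t` steps of decomposing the interval `[p.1, p.2)`. -/
def st (p : ℕ × ℕ) (t : ℕ) : ℕ × ℕ := stp^[t] (p.1, p.2 - p.1)

/-- Right-hand side of a chain rule. -/
def twoSyms (i t pos len : ℕ) : List (Symbol α (ℕ × Bool × ℕ)) :=
  [Symbol.nonterminal (pos, false, Nat.log 2 (len - 1)),
    Symbol.nonterminal
      (if (stp (pos, len)).2 ≤ 1 then ((stp (pos, len)).1, false, 0) else (i, true, t + 1))]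

/-- The interval decomposed by the chain with owner `i`: the whole string for the
root `i = Q.length`, the resolved interval for a phrase `i < Q.length`. -/
noncomputable def stOf (Q : List (List α)) (i : ℕ) : Option (ℕ × ℕ) :=
  if i = Q.length then some (0, Q.length) else resolve Q i

/-- The unique rule body of each nonterminal. -/
noncomputable def ff (Q : List (List α)) (a₀ : α) : ℕ × Bool × ℕ → List (Symbol α (ℕ × Bool × ℕ))
  | (pos, false, 0) =>
    if pos < Q.length then
      match resolve Q pos with
      | none =>
        match (Q.getD pos []).head? with
        | some a => [Symbol.terminal a]
        | none => [Symbol.terminal a₀]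
      | some p => twoSyms pos 0 (st p 0).1 (st p 0).2
    else [Symbol.terminal a₀]
  | (pos, false, l + 1) =>
    if pos + 2 ^ (l + 1) ≤ Q.length then
      [Symbol.nonterminal (pos, false, l), Symbol.nonterminal (pos + 2 ^ l, false, l)]
    else [Symbol.terminal a₀]
  | (i, true, t) =>
    match stOf Q i with
    | some p =>
      if 2 ≤ (st p t).2 then twoSyms i t (st p t).1 (st p t).2 else [Symbol.terminal a₀]
    | none => [Symbol.terminal a₀]

/-- The string derived by each nonterminal. -/
noncomputable def vv (Q : List (List α)) (a₀ : α) : ℕ × Bool × ℕ → List α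
  | (pos, false, l) => if pos + 2 ^ l ≤ Q.length then iv Q pos (2 ^ l) else [a₀]
  | (i, true, t) =>
    match stOf Q i with
    | some p => if 2 ≤ (st p t).2 then iv Q (st p t).1 (st p t).2 else [a₀]
    | none => [a₀]

/-- Rank for well-founded derivation. -/
def rk (Q : List (List α)) : ℕ × Bool × ℕ → ℕ
  | (pos, false, l) => (pos + 2 ^ l) * (Nat.log 2 Q.length + 3) + l
  | (i, true, t) => i * (Nat.log 2 Q.length + 3) + (Nat.log 2 Q.length + 2 - t)

lemma rank_lt1 (K a b c d : ℕ) (h : a + 1 ≤ b) (hc : c < K) : a * K + c < b * K + d :=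
  calc a * K + c < a * K + K := by omega
  _ = (a + 1) * K := by ring
  _ ≤ b * K := Nat.mul_le_mul_right K h
  _ ≤ b * K + d := Nat.le_add_right _ _

lemma rank_lt2 (K a b d : ℕ) (h : a ≤ b) (hd : 1 ≤ d) : a * K < b * K + d :=
  calc a * K ≤ b * K := Nat.mul_le_mul_right K h
  _ < b * K + d := by omega

lemma st_succ (p : ℕ × ℕ) (t : ℕ) : st p (t + 1) = stp (st p t) := by
  unfold st; rw [Function.iterate_succ_apply']

lemma stp_len_le (q : ℕ × ℕ) : (stp q).2 ≤ q.2 := Nat.sub_le _ _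

lemma stp_2 (q : ℕ × ℕ) (h : 2 ≤ q.2) :
    2 ^ Nat.log 2 (q.2 - 1) ≤ q.2 - 1 ∧ q.2 ≤ 2 ^ (Nat.log 2 (q.2 - 1) + 1) := by
  refine ⟨Nat.pow_log_le_self 2 (by omega), ?_⟩
  have := Nat.lt_pow_succ_log_self (b := 2) (by norm_num) (q.2 - 1)
  omega

lemma st_zero (p : ℕ × ℕ) : st p 0 = (p.1, p.2 - p.1) := rfl

lemma st_sum (p : ℕ × ℕ) : ∀ t, 1 ≤ (st p t).2 → (st p t).1 + (st p t).2 = p.1 + (p.2 - p.1) := by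
  intro t
  induction t with
  | zero => intro _; rfl
  | succ t ih =>
    intro h1
    have hmono : (st p (t + 1)).2 ≤ (st p t).2 := by rw [st_succ]; exact stp_len_le _
    have h2 : 2 ≤ (st p t).2 := by
      by_contra hc
      push_neg at hc
      have h1' : (st p t).2 = 1 := by omega
      rw [st_succ] at h1
      simp [stp, h1'] at h1
    have hpow := stp_2 (st p t) h2
    have hsum := ih (by omega)
    rw [st_succ] at *
    simp only [stp] at *
    omega

lemma chain_bound (Q : List (List α)) (p : ℕ × ℕ) (hp : p.2 - p.1 ≤ Q.length) :
    ∀ t, 2 ≤ (st p t).2 →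
      (st p t).2 ≤ 2 ^ (Nat.log 2 Q.length + 1 - t) ∧ t ≤ Nat.log 2 Q.length ∧
      Nat.log 2 ((st p t).2 - 1) + t ≤ Nat.log 2 Q.length := by
  set L := Nat.log 2 Q.length with hL
  intro t
  induction t with
  | zero =>
    intro h2
    have hlt : Q.length < 2 ^ (L + 1) := Nat.lt_pow_succ_log_self (by norm_num) _
    have hb0 : (st p 0).2 = p.2 - p.1 := rfl
    refine ⟨?_, Nat.zero_le _, ?_⟩
    · have : L + 1 - 0 = L + 1 := by omega
      rw [this]; omega
    · have := Nat.log_mono_right (b := 2) (show (st p 0).2 - 1 ≤ Q.length by omega)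
      omega
  | succ t ih =>
    intro h2
    have hmono : (st p (t + 1)).2 ≤ (st p t).2 := by rw [st_succ]; exact stp_len_le _
    have h2t : 2 ≤ (st p t).2 := by omega
    obtain ⟨hb, ht, hl⟩ := ih h2t
    set l := Nat.log 2 ((st p t).2 - 1) with hldef
    have hup : (st p t).2 ≤ 2 ^ (l + 1) := (stp_2 _ h2t).2
    have hstep : (st p (t + 1)).2 = (st p t).2 - 2 ^ l := by
      rw [st_succ, hldef]; rfl
    have hnew : (st p (t + 1)).2 ≤ 2 ^ l := by
      have h21 : (2:ℕ) ^ (l + 1) = 2 ^ l + 2 ^ l := by rw [pow_succ]; ring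
      omega
    have hlt' : l ≤ L - t := by omega
    have hle2 : (2:ℕ) ^ l ≤ 2 ^ (L - t) := Nat.pow_le_pow_right (by norm_num) hlt'
    have hLt : L + 1 - (t + 1) = L - t := by omega
    have htL : t + 1 ≤ L := by
      by_contra hc
      push_neg at hc
      have h0 : L - t = 0 := by omega
      rw [h0] at hle2
      simp at hle2
      omega
    refine ⟨by rw [hLt]; omega, htL, ?_⟩
    have h1' : (st p (t + 1)).2 - 1 < 2 ^ l := by omega
    have h2' : Nat.log 2 ((st p (t + 1)).2 - 1) < l :=
      Nat.log_lt_of_lt_pow (by omega) h1'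
    omega

lemma resolve_spec (Q : List (List α))
    (hQ : ∀ i : Fin Q.length, (Q.get i).length = 1 ∨ IsConcatOfPrecedingPhrases Q i) :
    ∀ fuel i, i < Q.length → i < fuel →
      (resolveF Q fuel i = none → (Q.getD i []).length = 1) ∧
      (∀ p : ℕ × ℕ, resolveF Q fuel i = some p →
        2 ≤ p.2 - p.1 ∧ p.2 ≤ i ∧ Q.getD i [] = iv Q p.1 (p.2 - p.1)) := by
  intro fuel
  induction fuel with
  | zero => intro i _ h; omega
  | succ fuel ih =>
    intro i hi _
    have hget : Q.get ⟨i, hi⟩ = Q.getD i [] := by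
      rw [List.getD_eq_getElem?_getD, List.getElem?_eq_getElem hi]
      rfl
    by_cases h1 : (Q.getD i []).length = 1
    · refine ⟨fun _ => h1, ?_⟩
      intro p hp
      simp only [resolveF, if_pos h1] at hp
      cases hp
    · have hex : ∃ p : ℕ × ℕ, p.1 < p.2 ∧ p.2 ≤ i ∧ Q.getD i [] = iv Q p.1 (p.2 - p.1) := by
        rcases hQ ⟨i, hi⟩ with h | ⟨j, k, hjk, hki, he⟩
        · rw [hget] at h; exact absurd h h1
        · exact ⟨(j, k), hjk, hki, by rw [← hget]; exact he⟩
      have hjkp : (jk Q i).1 < (jk Q i).2 ∧ (jk Q i).2 ≤ i ∧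
          Q.getD i [] = iv Q (jk Q i).1 ((jk Q i).2 - (jk Q i).1) := by
        unfold jk
        rw [dif_pos hex]
        exact hex.choose_spec
      obtain ⟨hlt, hle, he⟩ := hjkp
      by_cases h2 : (jk Q i).2 - (jk Q i).1 ≤ 1
      · have hd : (jk Q i).2 - (jk Q i).1 = 1 := by omega
        have hjm : (jk Q i).1 < Q.length := by omega
        have heq : Q.getD i [] = Q.getD (jk Q i).1 [] := by
          rw [he, hd, iv_one Q _ hjm]
        have hrec := ih (jk Q i).1 hjm (by omega)
        have hres : resolveF Q (fuel + 1) i = resolveF Q fuel (jk Q i).1 := by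
          simp only [resolveF, if_neg h1, if_pos h2]
        constructor
        · intro hn; rw [hres] at hn; rw [heq]; exact hrec.1 hn
        · intro p hp
          rw [hres] at hp
          obtain ⟨ha, hb, hc⟩ := hrec.2 p hp
          exact ⟨ha, by omega, by rw [heq]; exact hc⟩
      · have hres : resolveF Q (fuel + 1) i = some (jk Q i) := by
          simp only [resolveF, if_neg h1, if_neg h2]
        constructor
        · intro hn; rw [hres] at hn; simp at hn
        · intro p hp
          rw [hres] at hp
          obtain rfl : jk Q i = p := by injection hp
          exact ⟨by omega, hle, he⟩

lemma resolve_none (Q : List (List α))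
    (hQ : ∀ i : Fin Q.length, (Q.get i).length = 1 ∨ IsConcatOfPrecedingPhrases Q i)
    {i : ℕ} (hi : i < Q.length) (h : resolve Q i = none) : (Q.getD i []).length = 1 :=
  (resolve_spec Q hQ (i + 1) i hi (by omega)).1 h

lemma resolve_some (Q : List (List α))
    (hQ : ∀ i : Fin Q.length, (Q.get i).length = 1 ∨ IsConcatOfPrecedingPhrases Q i)
    {i : ℕ} {p : ℕ × ℕ} (hi : i < Q.length) (h : resolve Q i = some p) :
    2 ≤ p.2 - p.1 ∧ p.2 ≤ i ∧ Q.getD i [] = iv Q p.1 (p.2 - p.1) :=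
  (resolve_spec Q hQ (i + 1) i hi (by omega)).2 p h

lemma stOf_spec (Q : List (List α))
    (hQ : ∀ i : Fin Q.length, (Q.get i).length = 1 ∨ IsConcatOfPrecedingPhrases Q i)
    {i : ℕ} {p : ℕ × ℕ} (hi : i ≤ Q.length) (h : stOf Q i = some p) :
    p.1 + (p.2 - p.1) ≤ i ∧ p.2 - p.1 ≤ Q.length := by
  unfold stOf at h
  by_cases hm : i = Q.length
  · rw [if_pos hm] at h
    obtain rfl : (0, Q.length) = p := by injection h
    simp [hm]
  · rw [if_neg hm] at h
    have hi' : i < Q.length := by omega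
    obtain ⟨h2, hle, _⟩ := resolve_some Q hQ hi' h
    omega

lemma vv_B (Q : List (List α)) (a₀ : α) {pos l : ℕ} (h : pos + 2 ^ l ≤ Q.length) :
    vv Q a₀ (pos, false, l) = iv Q pos (2 ^ l) := by
  simp [vv, h]

lemma vv_chain (Q : List (List α)) (a₀ : α) {i t : ℕ} {p : ℕ × ℕ} (h : stOf Q i = some p)
    (h2 : 2 ≤ (st p t).2) : vv Q a₀ (i, true, t) = iv Q (st p t).1 (st p t).2 := by
  simp [vv, h, h2]

lemma chain_compat (Q : List (List α)) (a₀ : α)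
    (hQ : ∀ i : Fin Q.length, (Q.get i).length = 1 ∨ IsConcatOfPrecedingPhrases Q i)
    (i t : ℕ) (p : ℕ × ℕ) (him : i ≤ Q.length) (hstOf : stOf Q i = some p)
    (h2 : 2 ≤ (st p t).2) :
    iv Q (st p t).1 (st p t).2 = evalL (vv Q a₀) (twoSyms i t (st p t).1 (st p t).2) := by
  obtain ⟨hk, hlenm⟩ := stOf_spec Q hQ him hstOf
  have hsum : (st p t).1 + (st p t).2 = p.1 + (p.2 - p.1) := st_sum p t (by omega)
  set pos := (st p t).1 with hposd
  set len := (st p t).2 with hlend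
  set l := Nat.log 2 (len - 1) with hl
  have hpow1 : 2 ^ l ≤ len - 1 := Nat.pow_log_le_self 2 (by omega)
  have hstp' : stp (pos, len) = (pos + 2 ^ l, len - 2 ^ l) := rfl
  have hstep : st p (t + 1) = (pos + 2 ^ l, len - 2 ^ l) := by
    rw [st_succ, hposd, hlend]
    rfl
  have hsplit : iv Q pos len = iv Q pos (2 ^ l) ++ iv Q (pos + 2 ^ l) (len - 2 ^ l) := by
    have e : len = 2 ^ l + (len - 2 ^ l) := by omega
    rw [show iv Q pos len = iv Q pos (2 ^ l + (len - 2 ^ l)) from by rw [← e]]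
    exact iv_add Q pos _ _
  have hfirst : vv Q a₀ (pos, false, l) = iv Q pos (2 ^ l) := by
    apply vv_B
    omega
  simp only [twoSyms]
  rw [evalL_two, hfirst]
  by_cases hc : (stp (pos, len)).2 ≤ 1
  · rw [if_pos hc]
    rw [hstp'] at hc
    simp only at hc
    have hone : len - 2 ^ l = 1 := by omega
    have hsecond : vv Q a₀ ((stp (pos, len)).1, false, 0) = iv Q (pos + 2 ^ l) 1 := by
      rw [hstp']
      simp only
      apply vv_B
      simp only [pow_zero]
      omega
    rw [hsecond, hsplit, hone]
  · rw [if_neg hc]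
    rw [hstp'] at hc
    simp only at hc
    have h2' : 2 ≤ (st p (t + 1)).2 := by rw [hstep]; simp only; omega
    have hsecond : vv Q a₀ (i, true, t + 1) = iv Q (pos + 2 ^ l) (len - 2 ^ l) := by
      rw [vv_chain Q a₀ hstOf h2', hstep]
    rw [hsecond, hsplit]

lemma chain_closed (Q : List (List α))
    (hQ : ∀ i : Fin Q.length, (Q.get i).length = 1 ∨ IsConcatOfPrecedingPhrases Q i)
    {i t : ℕ} {p : ℕ × ℕ} (him : i ≤ Q.length) (hstOf : stOf Q i = some p)
    (h2 : 2 ≤ (st p t).2) (B : ℕ × Bool × ℕ)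
    (hB : Symbol.nonterminal B ∈ twoSyms (α := α) i t (st p t).1 (st p t).2) :
    (B.1 ≤ Q.length ∧ B.2.2 ≤ Nat.log 2 Q.length + 1) ∧
    rk Q B < i * (Nat.log 2 Q.length + 3) + (Nat.log 2 Q.length + 2 - t) := by
  set L := Nat.log 2 Q.length with hLd
  set K := L + 3 with hKd
  obtain ⟨hk, hlenm⟩ := stOf_spec Q hQ him hstOf
  obtain ⟨hlen, ht, hlt⟩ := chain_bound Q p hlenm t h2
  have hsum : (st p t).1 + (st p t).2 = p.1 + (p.2 - p.1) := st_sum p t (by omega)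
  set pos := (st p t).1 with hposd
  set len := (st p t).2 with hlend
  set l := Nat.log 2 (len - 1) with hl
  have hpow1 : 2 ^ l ≤ len - 1 := Nat.pow_log_le_self 2 (by omega)
  have h2l : 1 ≤ 2 ^ l := Nat.one_le_two_pow
  have hstp' : stp (pos, len) = (pos + 2 ^ l, len - 2 ^ l) := rfl
  simp only [twoSyms, List.mem_cons, List.not_mem_nil, or_false,
    Symbol.nonterminal.injEq] at hB
  rcases hB with rfl | rfl
  · constructor
    · constructor
      · simp only; omega
      · simp only; omega
    · show (pos + 2 ^ l) * K + l < i * K + (L + 2 - t)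
      exact rank_lt1 K _ _ _ _ (by omega) (by omega)
  · by_cases hc : (stp (pos, len)).2 ≤ 1
    · rw [if_pos hc]
      rw [hstp'] at hc
      simp only at hc
      constructor
      · constructor
        · simp only [hstp']; omega
        · simp only; omega
      · show ((stp (pos, len)).1 + 2 ^ 0) * K + 0 < i * K + (L + 2 - t)
        rw [hstp']
        simp only [pow_zero]
        have := rank_lt2 K (pos + 2 ^ l + 1) i (L + 2 - t) (by omega) (by omega)
        omega
    · rw [if_neg hc]
      constructor
      · exact ⟨him, by simp only; omega⟩
      · show i * K + (L + 2 - (t + 1)) < i * K + (L + 2 - t)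
        omega

lemma cnf_all (Q : List (List α)) (a₀ : α) (A : ℕ × Bool × ℕ) :
    (∃ a : α, ff Q a₀ A = [Symbol.terminal a]) ∨
    (∃ B C : ℕ × Bool × ℕ, ff Q a₀ A = [Symbol.nonterminal B, Symbol.nonterminal C]) := by
  obtain ⟨i, b, l⟩ := A
  cases b
  · match l with
    | 0 =>
      by_cases hi : i < Q.length
      · rcases hres : resolve Q i with _ | p
        · rcases hh : Q[i].head? with _ | a
          · exact Or.inl ⟨a₀, by simp [ff, hi, hres, getD_eq Q hi, hh]⟩
          · exact Or.inl ⟨a, by simp [ff, hi, hres, getD_eq Q hi, hh]⟩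
        · have e : ff Q a₀ (i, false, 0) = twoSyms i 0 (st p 0).1 (st p 0).2 := by
            simp [ff, hi, hres]
          rw [e, twoSyms]
          exact Or.inr ⟨_, _, rfl⟩
      · exact Or.inl ⟨a₀, by simp [ff, hi]⟩
    | l' + 1 =>
      by_cases hc : i + 2 ^ (l' + 1) ≤ Q.length
      · have e : ff Q a₀ (i, false, l' + 1) =
            [Symbol.nonterminal (i, false, l'), Symbol.nonterminal (i + 2 ^ l', false, l')] := by
          simp [ff, hc]
        rw [e]
        exact Or.inr ⟨_, _, rfl⟩
      · exact Or.inl ⟨a₀, by simp [ff, hc]⟩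
  · rcases hst : stOf Q i with _ | p
    · exact Or.inl ⟨a₀, by simp [ff, hst]⟩
    · by_cases h2 : 2 ≤ (st p l).2
      · have e : ff Q a₀ (i, true, l) = twoSyms i l (st p l).1 (st p l).2 := by
          simp [ff, hst, h2]
        rw [e, twoSyms]
        exact Or.inr ⟨_, _, rfl⟩
      · exact Or.inl ⟨a₀, by simp [ff, hst, h2]⟩

lemma compat_all (Q : List (List α)) (a₀ : α)
    (hQ : ∀ i : Fin Q.length, (Q.get i).length = 1 ∨ IsConcatOfPrecedingPhrases Q i)
    (A : ℕ × Bool × ℕ) (hA : A.1 ≤ Q.length) :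
    vv Q a₀ A = evalL (vv Q a₀) (ff Q a₀ A) := by
  obtain ⟨i, b, l⟩ := A
  simp only at hA
  cases b
  · match l with
    | 0 =>
      by_cases hi : i < Q.length
      · have hone : i + 2 ^ 0 ≤ Q.length := by simp only [pow_zero]; omega
        rcases hres : resolve Q i with _ | p
        · have hlen := resolve_none Q hQ hi hres
          obtain ⟨a, ha⟩ := List.length_eq_one_iff.mp hlen
          have hh : Q[i].head? = some a := by rw [← getD_eq Q hi, ha]; rfl
          rw [show ff Q a₀ (i, false, 0) = [Symbol.terminal a] from by
            simp [ff, hi, hres, getD_eq Q hi, hh]]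
          rw [evalL_term, vv_B Q a₀ hone, pow_zero, iv_one Q i hi, ha]
        · obtain ⟨h2p, hle, he⟩ := resolve_some Q hQ hi hres
          have hstOf : stOf Q i = some p := by
            unfold stOf
            rw [if_neg (by omega), hres]
          have h20 : 2 ≤ (st p 0).2 := by rw [st_zero]; simp only; omega
          have hcc := chain_compat Q a₀ hQ i 0 p (by omega) hstOf h20
          rw [show ff Q a₀ (i, false, 0) = twoSyms i 0 (st p 0).1 (st p 0).2 from by
            simp [ff, hi, hres]]
          rw [← hcc, st_zero]
          simp only
          rw [vv_B Q a₀ hone, pow_zero, iv_one Q i hi, he]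
      · have hcond : ¬ (i + 2 ^ 0 ≤ Q.length) := by simp only [pow_zero]; omega
        rw [show ff Q a₀ (i, false, 0) = [Symbol.terminal a₀] from by simp [ff, hi]]
        rw [evalL_term]
        show (if i + 2 ^ 0 ≤ Q.length then iv Q i (2 ^ 0) else [a₀]) = [a₀]
        rw [if_neg hcond]
    | l' + 1 =>
      by_cases hc : i + 2 ^ (l' + 1) ≤ Q.length
      · have h21 : (2:ℕ) ^ (l' + 1) = 2 ^ l' + 2 ^ l' := by rw [pow_succ]; ring
        rw [show ff Q a₀ (i, false, l' + 1) =
          [Symbol.nonterminal (i, false, l'), Symbol.nonterminal (i + 2 ^ l', false, l')] from by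
            simp [ff, hc]]
        rw [evalL_two, vv_B Q a₀ (show i + 2 ^ l' ≤ Q.length by omega),
          vv_B Q a₀ (show (i + 2 ^ l') + 2 ^ l' ≤ Q.length by omega)]
        rw [show vv Q a₀ (i, false, l' + 1) = iv Q i (2 ^ (l' + 1)) from vv_B Q a₀ hc]
        rw [show (2:ℕ) ^ (l' + 1) = 2 ^ l' + 2 ^ l' from h21, iv_add]
      · rw [show ff Q a₀ (i, false, l' + 1) = [Symbol.terminal a₀] from by simp [ff, hc]]
        rw [evalL_term]
        simp [vv, hc]
  · rcases hst : stOf Q i with _ | p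
    · rw [show ff Q a₀ (i, true, l) = [Symbol.terminal a₀] from by simp [ff, hst]]
      rw [evalL_term]
      simp [vv, hst]
    · by_cases h2 : 2 ≤ (st p l).2
      · have hcc := chain_compat Q a₀ hQ i l p hA hst h2
        rw [show ff Q a₀ (i, true, l) = twoSyms i l (st p l).1 (st p l).2 from by
          simp [ff, hst, h2]]
        rw [← hcc, vv_chain Q a₀ hst h2]
      · rw [show ff Q a₀ (i, true, l) = [Symbol.terminal a₀] from by simp [ff, hst, h2]]
        rw [evalL_term]
        simp [vv, hst, h2]

lemma closed_all (Q : List (List α)) (a₀ : α)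
    (hQ : ∀ i : Fin Q.length, (Q.get i).length = 1 ∨ IsConcatOfPrecedingPhrases Q i)
    (A : ℕ × Bool × ℕ) (hA : A.1 ≤ Q.length ∧ A.2.2 ≤ Nat.log 2 Q.length + 1)
    (B : ℕ × Bool × ℕ) (hB : Symbol.nonterminal B ∈ ff Q a₀ A) :
    (B.1 ≤ Q.length ∧ B.2.2 ≤ Nat.log 2 Q.length + 1) ∧ rk Q B < rk Q A := by
  set L := Nat.log 2 Q.length with hLd
  set K := L + 3 with hKd
  obtain ⟨i, b, l⟩ := A
  obtain ⟨hA1, hA2⟩ := hA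
  simp only at hA1 hA2
  cases b
  · match l with
    | 0 =>
      by_cases hi : i < Q.length
      · rcases hres : resolve Q i with _ | p
        · rcases hh : Q[i].head? with _ | a <;>
            simp [ff, hi, hres, getD_eq Q hi, hh] at hB
        · obtain ⟨h2p, hle, he⟩ := resolve_some Q hQ hi hres
          have hstOf : stOf Q i = some p := by
            unfold stOf
            rw [if_neg (by omega), hres]
          have h20 : 2 ≤ (st p 0).2 := by rw [st_zero]; simp only; omega
          rw [show ff Q a₀ (i, false, 0) = twoSyms i 0 (st p 0).1 (st p 0).2 from by
            simp [ff, hi, hres]] at hB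
          have hcc := chain_closed Q hQ (by omega) hstOf h20 B hB
          refine ⟨hcc.1, ?_⟩
          have h2' : rk Q B < i * K + (L + 2) := hcc.2
          show rk Q B < (i + 2 ^ 0) * K + 0
          have hexp : (i + 2 ^ 0) * K = i * K + K := by simp [pow_zero]; ring
          omega
      · simp [ff, hi] at hB
    | l' + 1 =>
      by_cases hc : i + 2 ^ (l' + 1) ≤ Q.length
      · rw [show ff Q a₀ (i, false, l' + 1) =
          [Symbol.nonterminal (i, false, l'), Symbol.nonterminal (i + 2 ^ l', false, l')] from by
            simp [ff, hc]] at hB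
        simp only [List.mem_cons, List.not_mem_nil, or_false, Symbol.nonterminal.injEq] at hB
        have h21 : (2:ℕ) ^ (l' + 1) = 2 ^ l' + 2 ^ l' := by rw [pow_succ]; ring
        have h2l : 1 ≤ (2:ℕ) ^ l' := Nat.one_le_two_pow
        rcases hB with rfl | rfl
        · refine ⟨⟨by simp only; omega, by simp only; omega⟩, ?_⟩
          show (i + 2 ^ l') * K + l' < (i + 2 ^ (l' + 1)) * K + (l' + 1)
          exact rank_lt1 K _ _ _ _ (by omega) (by omega)
        · refine ⟨⟨by simp only; omega, by simp only; omega⟩, ?_⟩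
          show ((i + 2 ^ l') + 2 ^ l') * K + l' < (i + 2 ^ (l' + 1)) * K + (l' + 1)
          have : (i + 2 ^ l') + 2 ^ l' = i + 2 ^ (l' + 1) := by omega
          rw [this]
          omega
      · simp [ff, hc] at hB
  · rcases hst : stOf Q i with _ | p
    · simp [ff, hst] at hB
    · by_cases h2 : 2 ≤ (st p l).2
      · rw [show ff Q a₀ (i, true, l) = twoSyms i l (st p l).1 (st p l).2 from by
          simp [ff, hst, h2]] at hB
        exact chain_closed Q hQ hA1 hst h2 B hB
      · simp [ff, hst, h2] at hB

end CNFAux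

open CNFAux in
theorem cnf_grammar_from_hierarchical_factorization :
    ∃ C : ℕ, ∀ {α : Type} (s : List α) (Q : List (List α)),
      Q.flatten = s → (∀ p ∈ Q, p ≠ []) →
      (∀ i : Fin Q.length, (Q.get i).length = 1 ∨ IsConcatOfPrecedingPhrases Q i) →
      1 ≤ Q.length →
      ∃ G : ContextFreeGrammar α, IsCNF G ∧ G.language = {s} ∧
        G.rules.card ≤ C * Q.length * (Nat.log 2 Q.length + 1) := by
  classical
  refine ⟨8, ?_⟩
  intro α s Q hflat hne hQ hm
  have h0lt : 0 < Q.length := hm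
  have h0 : Q.getD 0 [] ≠ [] := by
    rw [getD_eq Q h0lt]
    exact hne _ (Q.getElem_mem h0lt)
  obtain ⟨a₀, tl, ha₀⟩ := List.exists_cons_of_ne_nil h0
  set m := Q.length with hmd
  set L := Nat.log 2 m with hLd
  set S : Finset (ℕ × Bool × ℕ) :=
    Finset.range (m + 1) ×ˢ (Finset.univ : Finset Bool) ×ˢ Finset.range (L + 2) with hSd
  have hSmem : ∀ A : ℕ × Bool × ℕ, A ∈ S ↔ A.1 ≤ m ∧ A.2.2 ≤ L + 1 := by
    intro A
    simp [hSd, Finset.mem_product, Nat.lt_succ_iff]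
  obtain ⟨G, hc1, hc2, hc3⟩ := generic_lift (T := α) ((m, true, 0) : ℕ × Bool × ℕ)
    (vv Q a₀) (rk Q) S (ff Q a₀)
    (fun A hA => compat_all Q a₀ hQ A ((hSmem A).mp hA).1)
    (fun A hA B hB => by
      obtain ⟨h1, h2⟩ := closed_all Q a₀ hQ A ((hSmem A).mp hA) B hB
      exact ⟨(hSmem B).mpr h1, h2⟩)
    (fun A _ => cnf_all Q a₀ A)
    ((hSmem (m, true, 0)).mpr ⟨le_refl m, Nat.zero_le _⟩)
  have hv : vv Q a₀ (m, true, 0) = s := by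
    have hstOfm : stOf Q m = some (0, m) := by
      unfold stOf
      rw [if_pos rfl]
    have hst0 : st ((0 : ℕ), m) 0 = (0, m) := rfl
    by_cases h2m : 2 ≤ m
    · rw [vv_chain Q a₀ hstOfm (by rw [hst0]; exact h2m), hst0]
      show iv Q 0 m = s
      rw [← hflat]
      simp only [iv, List.drop_zero, hmd, List.take_length]
    · have hm1 : m = 1 := by omega
      have hdum : vv Q a₀ (m, true, 0) = [a₀] := by
        simp only [vv, hstOfm]
        rw [hst0]
        simp only
        rw [if_neg (by omega)]
      obtain ⟨x, hx⟩ := List.length_eq_one_iff.mp (show Q.length = 1 from by omega)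
      have hsx : s = x := by rw [← hflat, hx]; simp
      have hgd : Q.getD 0 [] = x := by rw [hx]; rfl
      have hlx : (Q.get ⟨0, h0lt⟩).length = 1 := by
        rcases hQ ⟨0, h0lt⟩ with h | ⟨j, k, hjk, hk0, _⟩
        · exact h
        · omega
      have hgx : Q.get ⟨0, h0lt⟩ = x := by
        rw [List.get_eq_getElem, ← getD_eq Q h0lt, hgd]
      have hxa : x = a₀ :: tl := by rw [← hgd, ha₀]
      have htl : tl = [] := by
        have hx1 : x.length = 1 := by rw [← hgx, hlx]
        rw [hxa] at hx1
        simpa using hx1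
      rw [hdum, hsx, hxa, htl]
  refine ⟨G, hc1, ?_, ?_⟩
  · rw [hc2, hv]
  · calc G.rules.card ≤ S.card := hc3
      _ = (m + 1) * (2 * (L + 2)) := by simp [hSd]
      _ ≤ 8 * m * (L + 1) := by nlinarith [hm]
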